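/- (Lemma III.2, summability part) Let Assumption 1 hold and let (x^k), (y^k), (p^k) be BADMM iterates. If the sequence z^k := (x^k, y^k, p^k) is bounded, then ∑_{k=0}^∞ ‖z^k − z^{k+1}‖² < ∞; in particular ‖z^k − z^{k+1}‖ → 0 as k → ∞. -/

import Mathlib

open scoped InnerProductSpace

/-- The augmented Lagrangian `L_α(x,y,p)`. -/
noncomputable def augL {n₁ n₂ m : ℕ}
    (A : EuclideanSpace ℝ (Fin n₁) →L[ℝ] EuclideanSpace ℝ (Fin m))
    (B : EuclideanSpace ℝ (Fin n₂) →L[ℝ] EuclideanSpace ℝ (Fin m))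
    (f : EuclideanSpace ℝ (Fin n₁) → ℝ) (g : EuclideanSpace ℝ (Fin n₂) → ℝ)
    (α : ℝ) (x : EuclideanSpace ℝ (Fin n₁)) (y : EuclideanSpace ℝ (Fin n₂))
    (p : EuclideanSpace ℝ (Fin m)) : ℝ :=
  f x + g y + ⟪p, A x - B y⟫_ℝ + α / 2 * ‖A x - B y‖ ^ 2

/-- Bregman distance of a differentiable function `h` with gradient `h'`. -/
noncomputable def bregman {n : ℕ} (h : EuclideanSpace ℝ (Fin n) → ℝ)
    (h' : EuclideanSpace ℝ (Fin n) → EuclideanSpace ℝ (Fin n))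
    (u v : EuclideanSpace ℝ (Fin n)) : ℝ :=
  h u - h v - ⟪h' v, u - v⟫_ℝ

set_option linter.unusedSectionVars false
set_option linter.unusedVariables false
set_option maxHeartbeats 1000000

section AuxLemmas

variable {E : Type*} [NormedAddCommGroup E] [InnerProductSpace ℝ E] [CompleteSpace E]
variable {F : Type*} [NormedAddCommGroup F] [InnerProductSpace ℝ F] [CompleteSpace F]

/-- Subgradient inequality for a convex differentiable function. -/
lemma grad_convex_ineq {h : E → ℝ} {h'v : E} {v : E} (hc : ConvexOn ℝ Set.univ h)
    (hd : HasGradientAt h h'v v) (u : E) : h v + ⟪h'v, u - v⟫_ℝ ≤ h u := by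
  have hq : ConvexOn ℝ Set.univ (fun t : ℝ => h (t • (u - v) + v)) := by
    have := hc.comp_affineMap (AffineMap.lineMap (v : E) u)
    have key : (fun t : ℝ => h (t • (u - v) + v)) = h ∘ AffineMap.lineMap v u := by
      funext t; simp [AffineMap.lineMap_apply]
    rw [key]; exact this
  have hγ : HasDerivAt (fun t : ℝ => t • (u - v) + v) (u - v) 0 := by
    simpa using ((hasDerivAt_id (0:ℝ)).smul_const (u - v)).add_const v
  have hderiv : HasDerivAt (fun t : ℝ => h (t • (u - v) + v)) ⟪h'v, u - v⟫_ℝ 0 := by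
    have h0 : ((0:ℝ) • (u - v) + v) = v := by simp
    have hd' : HasFDerivAt h ((InnerProductSpace.toDual ℝ E) h'v) ((0:ℝ) • (u - v) + v) := by
      rw [h0]; exact hasGradientAt_iff_hasFDerivAt.1 hd
    have := hd'.comp_hasDerivAt 0 hγ
    simp only [InnerProductSpace.toDual_apply_apply] at this
    exact this
  have hs := hq.le_slope_of_hasDerivAt (Set.mem_univ (0:ℝ)) (Set.mem_univ (1:ℝ))
    one_pos hderiv
  simp only [slope_def_field] at hs
  have : ⟪h'v, u - v⟫_ℝ ≤ h u - h v := by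
    simpa using hs
  linarith

/-- Strongly convex function minimizer inequality. -/
lemma strong_min {h : E → ℝ} {μ : ℝ} (hμ : 0 < μ)
    (hc : ConvexOn ℝ Set.univ (fun u => h u - μ / 2 * ‖u‖ ^ 2))
    {x₀ : E} (hmin : ∀ u, h x₀ ≤ h u) (u : E) :
    h x₀ + μ / 2 * ‖u - x₀‖ ^ 2 ≤ h u := by
  have hsc : StrongConvexOn Set.univ μ h := strongConvexOn_iff_convex.2 hc
  have key : ∀ a ∈ Set.Ioo (0:ℝ) 1, a * (μ / 2 * ‖u - x₀‖ ^ 2) ≤ h u - h x₀ := by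
    intro a ha
    have hb0 : (0:ℝ) < 1 - a := by linarith [ha.2]
    have hcomb := hsc.2 (Set.mem_univ u) (Set.mem_univ x₀) hb0.le ha.1.le (by ring)
    have hm := hmin ((1 - a) • u + a • x₀)
    have h2 : h x₀ ≤ (1 - a) * h u + a * h x₀ - (1 - a) * a * (μ / 2 * ‖u - x₀‖ ^ 2) := by
      simp only [smul_eq_mul] at hcomb
      linarith
    nlinarith [h2, hb0]
  have hlim : Filter.Tendsto (fun a : ℝ => a * (μ / 2 * ‖u - x₀‖ ^ 2)) (nhdsWithin 1 (Set.Iio 1))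
      (nhds (μ / 2 * ‖u - x₀‖ ^ 2)) := by
    have h1 : Filter.Tendsto (fun a : ℝ => a * (μ / 2 * ‖u - x₀‖ ^ 2)) (nhds 1)
        (nhds (1 * (μ / 2 * ‖u - x₀‖ ^ 2))) :=
      (continuous_id.mul continuous_const).tendsto (1:ℝ)
    simpa using h1.mono_left nhdsWithin_le_nhds
  have : μ / 2 * ‖u - x₀‖ ^ 2 ≤ h u - h x₀ := by
    refine le_of_tendsto hlim ?_
    filter_upwards [Ioo_mem_nhdsLT_of_mem (by constructor <;> norm_num : (1:ℝ) ∈ Set.Ioc (0:ℝ) 1)] with a ha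
    exact key a ha
  linarith

/-- A lower semicontinuous function is bounded below on a compact set. -/
lemma lsc_bddBelow {X : Type*} [TopologicalSpace X] {g : X → ℝ} (hg : LowerSemicontinuous g)
    {s : Set X} (hs : IsCompact s) : ∃ M : ℝ, ∀ v ∈ s, M ≤ g v := by
  obtain ⟨t, hts, hcover⟩ := hs.elim_nhds_subcover (fun u => {v | g u - 1 < g v})
    (fun u _ => hg u (g u - 1) (by linarith))
  rcases t.eq_empty_or_nonempty with rfl | hne
  · exact ⟨0, fun v hv => absurd (hcover hv) (by simp)⟩
  · refine ⟨t.inf' hne (fun u => g u - 1), fun v hv => ?_⟩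
    have := hcover hv
    simp only [Set.mem_iUnion, Set.mem_setOf_eq] at this
    obtain ⟨u, hu, hvu⟩ := this
    exact le_trans (Finset.inf'_le _ hu) hvu.le

lemma HasGradientAt.add'' {f₁ f₂ : E → ℝ} {g₁ g₂ u : E} (h₁ : HasGradientAt f₁ g₁ u)
    (h₂ : HasGradientAt f₂ g₂ u) : HasGradientAt (fun x => f₁ x + f₂ x) (g₁ + g₂) u := by
  rw [hasGradientAt_iff_hasFDerivAt] at *
  rw [map_add]; exact h₁.add h₂

lemma HasGradientAt.sub'' {f₁ f₂ : E → ℝ} {g₁ g₂ u : E} (h₁ : HasGradientAt f₁ g₁ u)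
    (h₂ : HasGradientAt f₂ g₂ u) : HasGradientAt (fun x => f₁ x - f₂ x) (g₁ - g₂) u := by
  rw [hasGradientAt_iff_hasFDerivAt] at *
  rw [map_sub]; exact h₁.sub h₂

lemma HasGradientAt.add_const'' {f₁ : E → ℝ} {g₁ u : E} (h₁ : HasGradientAt f₁ g₁ u) (c : ℝ) :
    HasGradientAt (fun x => f₁ x + c) g₁ u := by
  rw [hasGradientAt_iff_hasFDerivAt] at *
  exact h₁.add_const c

lemma hasGradientAt_comb (A : E →L[ℝ] F) (c p : F) (α : ℝ) (u : E) :
    HasGradientAt (fun x => ⟪p, A x - c⟫_ℝ + α / 2 * ‖A x - c‖ ^ 2)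
      (ContinuousLinearMap.adjoint A p + α • (ContinuousLinearMap.adjoint A) (A u - c)) u := by
  rw [hasGradientAt_iff_hasFDerivAt]
  have hAff : HasFDerivAt (fun x : E => A x - c) A u := A.hasFDerivAt.sub_const c
  have h1 : HasFDerivAt (fun x : E => ⟪p, A x - c⟫_ℝ) ((innerSL ℝ p).comp A) u := by
    have := ((innerSL ℝ p).hasFDerivAt (x := A u - c)).comp u hAff
    exact this
  have h2 : HasFDerivAt (fun x : E => ⟪A x - c, A x - c⟫_ℝ)
      ((fderivInnerCLM ℝ (A u - c, A u - c)).comp (A.prod A)) u := hAff.inner ℝ hAff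
  have h3 : HasFDerivAt (fun x : E => α / 2 * ⟪A x - c, A x - c⟫_ℝ)
      ((α / 2) • ((fderivInnerCLM ℝ (A u - c, A u - c)).comp (A.prod A))) u := h2.const_mul _
  have hsum : HasFDerivAt (fun x : E => ⟪p, A x - c⟫_ℝ + α / 2 * ⟪A x - c, A x - c⟫_ℝ) _ u := h1.add h3
  have hfun : (fun x : E => ⟪p, A x - c⟫_ℝ + α / 2 * ⟪A x - c, A x - c⟫_ℝ)
      = (fun x => ⟪p, A x - c⟫_ℝ + α / 2 * ‖A x - c‖ ^ 2) := by
    funext x; rw [real_inner_self_eq_norm_sq]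
  rw [hfun] at hsum
  have hEq : (InnerProductSpace.toDual ℝ E) (ContinuousLinearMap.adjoint A p
        + α • (ContinuousLinearMap.adjoint A) (A u - c))
      = ((innerSL ℝ p).comp A + (α / 2) • ((fderivInnerCLM ℝ (A u - c, A u - c)).comp (A.prod A))) := by
    ext v
    simp only [InnerProductSpace.toDual_apply_apply, inner_add_left, real_inner_smul_left,
      ContinuousLinearMap.adjoint_inner_left, fderivInnerCLM_apply,
      ContinuousLinearMap.coe_comp', Function.comp_apply, ContinuousLinearMap.add_apply,
      ContinuousLinearMap.coe_smul', Pi.smul_apply, ContinuousLinearMap.prod_apply,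
      smul_eq_mul, innerSL_apply_apply]
    rw [real_inner_comm (A v) (A u - c)]
    ring
  rw [hEq]
  exact hsum

lemma hasGradientAt_inner_const_sub (w xk : E) (u : E) :
    HasGradientAt (fun x : E => ⟪w, x - xk⟫_ℝ) w u := by
  rw [hasGradientAt_iff_hasFDerivAt]
  have hAff : HasFDerivAt (fun x : E => x - xk) (ContinuousLinearMap.id ℝ E) u :=
    (hasFDerivAt_id u).sub_const xk
  have h1 := ((innerSL ℝ w).hasFDerivAt (x := u - xk)).comp u hAff
  have hEq : (InnerProductSpace.toDual ℝ E) w = (innerSL ℝ w).comp (ContinuousLinearMap.id ℝ E) := by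
    ext v
    simp [InnerProductSpace.toDual_apply_apply]
  rw [hEq]
  exact h1

lemma hasGradientAt_const_mul_norm_sq (μ : ℝ) (u : E) :
    HasGradientAt (fun x : E => μ / 2 * ‖x‖ ^ 2) (μ • u) u := by
  have := hasGradientAt_comb (ContinuousLinearMap.id ℝ E) 0 0 μ u
  simpa [ContinuousLinearMap.adjoint_id] using this

lemma grad_eq_zero_of_min {h : E → ℝ} {G : E} {x₀ : E} (hd : HasGradientAt h G x₀)
    (hmin : ∀ u, h x₀ ≤ h u) : G = 0 := by
  have hloc : IsLocalMin h x₀ := Filter.Eventually.of_forall (fun u => hmin u)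
  have h0 := hloc.hasFDerivAt_eq_zero (hasGradientAt_iff_hasFDerivAt.1 hd)
  have := congrArg (fun T => (InnerProductSpace.toDual ℝ E).symm T) h0
  simpa using this

lemma injective_lower_bound {n m : ℕ}
    (B : EuclideanSpace ℝ (Fin n) →L[ℝ] EuclideanSpace ℝ (Fin m))
    (hB : Function.Injective B) : ∃ σ : ℝ, 0 < σ ∧ ∀ u, σ * ‖u‖ ≤ ‖B u‖ := by
  have hBlin : Function.Injective (B : EuclideanSpace ℝ (Fin n) →ₗ[ℝ] EuclideanSpace ℝ (Fin m)) := hB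
  let e := LinearEquiv.ofInjective (B : EuclideanSpace ℝ (Fin n) →ₗ[ℝ] EuclideanSpace ℝ (Fin m)) hBlin
  let e' := e.toContinuousLinearEquiv
  set C := ‖e'.symm.toContinuousLinearMap‖ with hC
  have hC0 : 0 ≤ C := by rw [hC]; exact norm_nonneg e'.symm.toContinuousLinearMap
  refine ⟨(C + 1)⁻¹, by positivity, fun u => ?_⟩
  have h1 : ‖u‖ ≤ C * ‖B u‖ := by
    have h2 : ‖e'.symm.toContinuousLinearMap (e' u)‖ ≤ C * ‖e' u‖ :=
      e'.symm.toContinuousLinearMap.le_opNorm _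
    have h3 : e'.symm.toContinuousLinearMap (e' u) = u := e'.symm_apply_apply u
    have h4 : ‖e' u‖ = ‖B u‖ := by
      have : ((e' u : ↥(LinearMap.range (B : EuclideanSpace ℝ (Fin n) →ₗ[ℝ] EuclideanSpace ℝ (Fin m)))) :
          EuclideanSpace ℝ (Fin m)) = B u := by
        change ((e u : ↥(LinearMap.range _)) : EuclideanSpace ℝ (Fin m)) = B u
        simp [e]
      rw [show ‖e' u‖ = ‖((e' u : ↥(LinearMap.range (B : EuclideanSpace ℝ (Fin n) →ₗ[ℝ] EuclideanSpace ℝ (Fin m)))) :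
          EuclideanSpace ℝ (Fin m))‖ from rfl, this]
    rw [h3, h4] at h2
    exact h2
  rw [inv_mul_le_iff₀ (by positivity)]
  calc ‖u‖ ≤ C * ‖B u‖ := h1
    _ ≤ (C + 1) * ‖B u‖ := by nlinarith [norm_nonneg (B u)]

/-- Gradient of the x-subproblem objective. -/
lemma xobj_hasGradient {f φ : E → ℝ} {f' φ' : E → E}
    (hf : ∀ u, HasGradientAt f (f' u) u) (hφ : ∀ u, HasGradientAt φ (φ' u) u)
    (A : E →L[ℝ] F) (c p : F) (α gy : ℝ) (xk : E) (u : E) :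
    HasGradientAt (fun x' => (f x' + gy + ⟪p, A x' - c⟫_ℝ + α / 2 * ‖A x' - c‖ ^ 2)
        + (φ x' - φ xk - ⟪φ' xk, x' - xk⟫_ℝ))
      (f' u + (ContinuousLinearMap.adjoint A p + α • (ContinuousLinearMap.adjoint A) (A u - c))
        + (φ' u - φ' xk)) u := by
  have hmain : HasGradientAt (fun x' => ((f x' + gy)
        + (⟪p, A x' - c⟫_ℝ + α / 2 * ‖A x' - c‖ ^ 2))
        + ((φ x' - ⟪φ' xk, x' - xk⟫_ℝ) + (- φ xk)))
      ((f' u) + (ContinuousLinearMap.adjoint A p + α • (ContinuousLinearMap.adjoint A) (A u - c))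
        + (φ' u - φ' xk)) u :=
    (((hf u).add_const'' gy).add'' (hasGradientAt_comb A c p α u)).add''
      (((hφ u).sub'' (hasGradientAt_inner_const_sub (φ' xk) xk u)).add_const'' (-(φ xk)))
  have hfun : (fun x' => ((f x' + gy) + (⟪p, A x' - c⟫_ℝ + α / 2 * ‖A x' - c‖ ^ 2))
        + ((φ x' - ⟪φ' xk, x' - xk⟫_ℝ) + (- φ xk)))
      = (fun x' => (f x' + gy + ⟪p, A x' - c⟫_ℝ + α / 2 * ‖A x' - c‖ ^ 2)
        + (φ x' - φ xk - ⟪φ' xk, x' - xk⟫_ℝ)) := by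
    funext x'; ring
  rw [hfun] at hmain
  exact hmain

/-- An affine function given by an inner product plus constant is convex. -/
lemma convexOn_inner_add_const (w : E) (r : ℝ) :
    ConvexOn ℝ Set.univ (fun x : E => ⟪w, x⟫_ℝ + r) := by
  refine ⟨convex_univ, ?_⟩
  intro z _ z' _ a b ha hb hab
  simp only [inner_add_right, real_inner_smul_right, smul_eq_mul]
  have h : a * (⟪w, z⟫_ℝ + r) + b * (⟪w, z'⟫_ℝ + r) = a * ⟪w, z⟫_ℝ + b * ⟪w, z'⟫_ℝ + r := by
    linear_combination r * hab
  rw [h]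

end AuxLemmas

theorem badmm_lemma_III_2_summable
{n₁ n₂ m : ℕ} (hn₁ : 0 < n₁) (hn₂ : 0 < n₂) (hm : 0 < m)
    (A : EuclideanSpace ℝ (Fin n₁) →L[ℝ] EuclideanSpace ℝ (Fin m))
    (B : EuclideanSpace ℝ (Fin n₂) →L[ℝ] EuclideanSpace ℝ (Fin m))
    (f : EuclideanSpace ℝ (Fin n₁) → ℝ) (g : EuclideanSpace ℝ (Fin n₂) → ℝ)
    (f' : EuclideanSpace ℝ (Fin n₁) → EuclideanSpace ℝ (Fin n₁))
    (hfC1 : ContDiff ℝ 1 f) (hfgrad : ∀ u, HasGradientAt f (f' u) u)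
    (ℓf : ℝ) (hℓf : 0 ≤ ℓf) (hf' : ∀ u v, ‖f' u - f' v‖ ≤ ℓf * ‖u - v‖)
    (hg : LowerSemicontinuous g)
    (φ : EuclideanSpace ℝ (Fin n₁) → ℝ)
    (φ' : EuclideanSpace ℝ (Fin n₁) → EuclideanSpace ℝ (Fin n₁))
    (hφconv : ConvexOn ℝ Set.univ φ) (hφdiff : ∀ u, HasGradientAt φ (φ' u) u)
    (ℓφ : ℝ) (hℓφ : 0 ≤ ℓφ) (hφ' : ∀ u v, ‖φ' u - φ' v‖ ≤ ℓφ * ‖u - v‖)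
    (ψ : EuclideanSpace ℝ (Fin n₂) → ℝ)
    (ψ' : EuclideanSpace ℝ (Fin n₂) → EuclideanSpace ℝ (Fin n₂))
    (hψconv : ConvexOn ℝ Set.univ ψ) (hψdiff : ∀ u, HasGradientAt ψ (ψ' u) u)
    (ℓψ : ℝ) (hℓψ : 0 ≤ ℓψ) (hψ' : ∀ u v, ‖ψ' u - ψ' v‖ ≤ ℓψ * ‖u - v‖)
    (α μ₀ : ℝ) (hα : 0 < α) (hμ₀ : 0 < μ₀)
    (hA : ∀ q : EuclideanSpace ℝ (Fin m),
      μ₀ * ‖q‖ ^ 2 ≤ ‖ContinuousLinearMap.adjoint A q‖ ^ 2)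
    (μ₁ : ℝ) (hμ₁ : 0 < μ₁)
    (hsc : (∀ (y : EuclideanSpace ℝ (Fin n₂)) (p : EuclideanSpace ℝ (Fin m)),
          ConvexOn ℝ Set.univ (fun x => augL A B f g α x y p - μ₁ / 2 * ‖x‖ ^ 2)) ∨
        ConvexOn ℝ Set.univ (fun x => φ x - μ₁ / 2 * ‖x‖ ^ 2))
    (hαbig : α > 4 * ((ℓf + ℓφ) ^ 2 + ℓφ ^ 2) / (μ₁ * μ₀))
    (x : ℕ → EuclideanSpace ℝ (Fin n₁)) (y : ℕ → EuclideanSpace ℝ (Fin n₂))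
    (p : ℕ → EuclideanSpace ℝ (Fin m))
    (hy : ∀ k, ∀ y' : EuclideanSpace ℝ (Fin n₂),
      augL A B f g α (x k) (y (k + 1)) (p k) + bregman ψ ψ' (y (k + 1)) (y k) ≤
        augL A B f g α (x k) y' (p k) + bregman ψ ψ' y' (y k))
    (hx : ∀ k, ∀ x' : EuclideanSpace ℝ (Fin n₁),
      augL A B f g α (x (k + 1)) (y (k + 1)) (p k) + bregman φ φ' (x (k + 1)) (x k) ≤
        augL A B f g α x' (y (k + 1)) (p k) + bregman φ φ' x' (x k))
    (hp : ∀ k, p (k + 1) = p k + α • (A (x (k + 1)) - B (y (k + 1))))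
    (hB : Function.Injective B)
    (hbdd : Bornology.IsBounded (Set.range fun k => (x k, y k, p k))) :
    Summable (fun k => ‖((x k, y k, p k) : EuclideanSpace ℝ (Fin n₁) ×
        EuclideanSpace ℝ (Fin n₂) × EuclideanSpace ℝ (Fin m))
        - (x (k + 1), y (k + 1), p (k + 1))‖ ^ 2) ∧
      Filter.Tendsto (fun k => ‖((x k, y k, p k) : EuclideanSpace ℝ (Fin n₁) ×
          EuclideanSpace ℝ (Fin n₂) × EuclideanSpace ℝ (Fin m))
          - (x (k + 1), y (k + 1), p (k + 1))‖)
        Filter.atTop (nhds 0) := by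
  classical
  -- Stationarity of the x-update
  have hgradobj : ∀ k u, HasGradientAt
      (fun x' => augL A B f g α x' (y (k+1)) (p k) + bregman φ φ' x' (x k))
      (f' u + (ContinuousLinearMap.adjoint A (p k)
        + α • (ContinuousLinearMap.adjoint A) (A u - B (y (k+1)))) + (φ' u - φ' (x k))) u := by
    intro k u
    have := xobj_hasGradient hfgrad hφdiff A (B (y (k+1))) (p k) α (g (y (k+1))) (x k) u
    simpa only [augL, bregman] using this
  have hstat : ∀ k, ContinuousLinearMap.adjoint A (p (k+1))
      = -(f' (x (k+1))) - φ' (x (k+1)) + φ' (x k) := by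
    intro k
    have h0 := grad_eq_zero_of_min (hgradobj k (x (k+1))) (hx k)
    have h1 : ContinuousLinearMap.adjoint A (p (k+1))
        = ContinuousLinearMap.adjoint A (p k)
          + α • (ContinuousLinearMap.adjoint A) (A (x (k+1)) - B (y (k+1))) := by
      rw [hp k, map_add, map_smul]
    rw [h1]
    linear_combination (norm := module) h0
  -- Bound on consecutive dual steps
  have hPbound : ∀ k, μ₀ * ‖p (k+1+1) - p (k+1)‖^2
      ≤ 2*(ℓf+ℓφ)^2 * ‖x (k+1+1) - x (k+1)‖^2 + 2*ℓφ^2 * ‖x (k+1) - x k‖^2 := by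
    intro k
    have h1 : ContinuousLinearMap.adjoint A (p (k+1+1) - p (k+1))
        = -(f' (x (k+1+1)) - f' (x (k+1))) + -(φ' (x (k+1+1)) - φ' (x (k+1)))
          + (φ' (x (k+1)) - φ' (x k)) := by
      rw [map_sub, hstat (k+1), hstat k]
      module
    have h2 : ‖ContinuousLinearMap.adjoint A (p (k+1+1) - p (k+1))‖
        ≤ (ℓf + ℓφ) * ‖x (k+1+1) - x (k+1)‖ + ℓφ * ‖x (k+1) - x k‖ := by
      rw [h1]
      have e1 := norm_add_le (-(f' (x (k+1+1)) - f' (x (k+1))) + -(φ' (x (k+1+1)) - φ' (x (k+1))))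
        (φ' (x (k+1)) - φ' (x k))
      have e2 := norm_add_le (-(f' (x (k+1+1)) - f' (x (k+1)))) (-(φ' (x (k+1+1)) - φ' (x (k+1))))
      rw [norm_neg, norm_neg] at e2
      have h3 := hf' (x (k+1+1)) (x (k+1))
      have h4 := hφ' (x (k+1+1)) (x (k+1))
      have h5 := hφ' (x (k+1)) (x k)
      calc ‖-(f' (x (k+1+1)) - f' (x (k+1))) + -(φ' (x (k+1+1)) - φ' (x (k+1)))
            + (φ' (x (k+1)) - φ' (x k))‖
          ≤ ‖-(f' (x (k+1+1)) - f' (x (k+1))) + -(φ' (x (k+1+1)) - φ' (x (k+1)))‖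
            + ‖φ' (x (k+1)) - φ' (x k)‖ := e1
        _ ≤ (ℓf + ℓφ) * ‖x (k+1+1) - x (k+1)‖ + ℓφ * ‖x (k+1) - x k‖ := by linarith
    have h3 := hA (p (k+1+1) - p (k+1))
    have h4 : ‖ContinuousLinearMap.adjoint A (p (k+1+1) - p (k+1))‖^2
        ≤ ((ℓf + ℓφ) * ‖x (k+1+1) - x (k+1)‖ + ℓφ * ‖x (k+1) - x k‖)^2 :=
      pow_le_pow_left₀ (norm_nonneg _) h2 2
    nlinarith [sq_nonneg ((ℓf+ℓφ) * ‖x (k+1+1) - x (k+1)‖ - ℓφ * ‖x (k+1) - x k‖),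
      norm_nonneg (x (k+1+1) - x (k+1)), norm_nonneg (x (k+1) - x k)]
  -- Descent from the y-update
  have hyineq : ∀ k, augL A B f g α (x k) (y (k+1)) (p k) ≤ augL A B f g α (x k) (y k) (p k) := by
    intro k
    have h0 := hy k (y k)
    have hb1 : bregman ψ ψ' (y k) (y k) = 0 := by simp [bregman]
    have hb2 : 0 ≤ bregman ψ ψ' (y (k+1)) (y k) := by
      have := grad_convex_ineq hψconv (hψdiff (y k)) (y (k+1))
      simp only [bregman]
      linarith
    rw [hb1] at h0
    linarith
  -- Descent from the x-update
  have hxineq : ∀ k, augL A B f g α (x (k+1)) (y (k+1)) (p k) + μ₁/2 * ‖x (k+1) - x k‖^2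
      ≤ augL A B f g α (x k) (y (k+1)) (p k) := by
    intro k
    have hbreg0 : bregman φ φ' (x k) (x k) = 0 := by simp [bregman]
    rcases hsc with hscL | hscφ
    · have hbc : ConvexOn ℝ Set.univ (fun x' => bregman φ φ' x' (x k)) := by
        have haff := convexOn_inner_add_const (-(φ' (x k))) (-(φ (x k)) + ⟪φ' (x k), x k⟫_ℝ)
        have hadd := hφconv.add haff
        have hfe : (fun x' => φ x' + (⟪-(φ' (x k)), x'⟫_ℝ + (-(φ (x k)) + ⟪φ' (x k), x k⟫_ℝ)))
            = fun x' => bregman φ φ' x' (x k) := by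
          funext x'
          simp only [bregman, inner_sub_right, inner_neg_left]
          ring
        have hadd' : ConvexOn ℝ Set.univ
            (fun x' => φ x' + (⟪-(φ' (x k)), x'⟫_ℝ + (-(φ (x k)) + ⟪φ' (x k), x k⟫_ℝ))) := hadd
        rwa [hfe] at hadd'
      have hconv : ConvexOn ℝ Set.univ
          (fun x' => (augL A B f g α x' (y (k+1)) (p k) + bregman φ φ' x' (x k))
            - μ₁/2 * ‖x'‖^2) := by
        have hadd := (hscL (y (k+1)) (p k)).add hbc
        have hfe2 : (fun x' => (augL A B f g α x' (y (k+1)) (p k) - μ₁/2 * ‖x'‖^2)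
              + bregman φ φ' x' (x k))
            = fun x' => (augL A B f g α x' (y (k+1)) (p k) + bregman φ φ' x' (x k))
              - μ₁/2 * ‖x'‖^2 := by
          funext x'; ring
        have hadd' : ConvexOn ℝ Set.univ
            (fun x' => (augL A B f g α x' (y (k+1)) (p k) - μ₁/2 * ‖x'‖^2)
              + bregman φ φ' x' (x k)) := hadd
        rwa [hfe2] at hadd'
      have hsm := strong_min hμ₁ hconv (hx k) (x k)
      rw [hbreg0, norm_sub_rev (x k) (x (k+1))] at hsm
      have hb2 : 0 ≤ bregman φ φ' (x (k+1)) (x k) := by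
        have := grad_convex_ineq hφconv (hφdiff (x k)) (x (k+1))
        simp only [bregman]
        linarith
      linarith
    · have hbreg : μ₁/2 * ‖x (k+1) - x k‖^2 ≤ bregman φ φ' (x (k+1)) (x k) := by
        have hg' : HasGradientAt (fun z => φ z - μ₁/2 * ‖z‖^2) (φ' (x k) - μ₁ • (x k)) (x k) :=
          (hφdiff (x k)).sub'' (hasGradientAt_const_mul_norm_sq μ₁ (x k))
        have hkey := grad_convex_ineq hscφ hg' (x (k+1))
        simp only [bregman]
        rw [inner_sub_left, real_inner_smul_left] at hkey
        have hin : ⟪x k, x (k+1) - x k⟫_ℝ = ⟪x k, x (k+1)⟫_ℝ - ‖x k‖^2 := by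
          rw [inner_sub_right, real_inner_self_eq_norm_sq]
        rw [hin] at hkey
        have hexp : ‖x (k+1) - x k‖^2 = ‖x (k+1)‖^2 - 2*⟪x k, x (k+1)⟫_ℝ + ‖x k‖^2 := by
          rw [norm_sub_sq_real, real_inner_comm]
        nlinarith [hkey, hexp]
      have h0 := hx k (x k)
      rw [hbreg0] at h0
      linarith
  -- p-update identity
  have hpstep : ∀ k, augL A B f g α (x (k+1)) (y (k+1)) (p (k+1))
      = augL A B f g α (x (k+1)) (y (k+1)) (p k) + (1/α) * ‖p (k+1) - p k‖^2 := by
    intro k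
    have hr : p (k+1) - p k = α • (A (x (k+1)) - B (y (k+1))) := by
      rw [hp k]; abel
    simp only [augL]
    rw [hr, hp k, inner_add_left, real_inner_smul_left, real_inner_self_eq_norm_sq,
      norm_smul, Real.norm_eq_abs, abs_of_pos hα, mul_pow]
    field_simp
    ring
  -- full descent
  have hdescent : ∀ k, augL A B f g α (x (k+1)) (y (k+1)) (p (k+1)) + μ₁/2 * ‖x (k+1) - x k‖^2
      ≤ augL A B f g α (x k) (y k) (p k) + (1/α) * ‖p (k+1) - p k‖^2 := by
    intro k
    have h1 := hpstep k
    have h2 := hxineq k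
    have h3 := hyineq k
    linarith
  -- lower bound of augL along the iterates
  obtain ⟨R, hR⟩ := isBounded_iff_forall_norm_le.1 hbdd
  have hzR : ∀ k, ‖((x k, y k, p k) : EuclideanSpace ℝ (Fin n₁) ×
      EuclideanSpace ℝ (Fin n₂) × EuclideanSpace ℝ (Fin m))‖ ≤ R := fun k => hR _ ⟨k, rfl⟩
  have hxR : ∀ k, ‖x k‖ ≤ R := fun k =>
    le_trans (norm_fst_le ((x k, y k, p k) : EuclideanSpace ℝ (Fin n₁) ×
      (EuclideanSpace ℝ (Fin n₂) × EuclideanSpace ℝ (Fin m)))) (hzR k)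
  have hyR : ∀ k, ‖y k‖ ≤ R := fun k =>
    le_trans (le_trans (norm_fst_le ((y k, p k) : EuclideanSpace ℝ (Fin n₂) ×
      EuclideanSpace ℝ (Fin m))) (norm_snd_le ((x k, (y k, p k)) : EuclideanSpace ℝ (Fin n₁) ×
      (EuclideanSpace ℝ (Fin n₂) × EuclideanSpace ℝ (Fin m))))) (hzR k)
  have hpR : ∀ k, ‖p k‖ ≤ R := fun k =>
    le_trans (le_trans (norm_snd_le ((y k, p k) : EuclideanSpace ℝ (Fin n₂) ×
      EuclideanSpace ℝ (Fin m))) (norm_snd_le ((x k, (y k, p k)) : EuclideanSpace ℝ (Fin n₁) ×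
      (EuclideanSpace ℝ (Fin n₂) × EuclideanSpace ℝ (Fin m))))) (hzR k)
  have hR0 : 0 ≤ R := le_trans (norm_nonneg _) (hxR 0)
  obtain ⟨Mf, hMf⟩ := lsc_bddBelow (hfC1.continuous.lowerSemicontinuous)
    (isCompact_closedBall (0 : EuclideanSpace ℝ (Fin n₁)) R)
  obtain ⟨Mg, hMg⟩ := lsc_bddBelow hg
    (isCompact_closedBall (0 : EuclideanSpace ℝ (Fin n₂)) R)
  set Mlb : ℝ := Mf + Mg - R * (‖A‖ * R + ‖B‖ * R) with hMlb
  have hLB : ∀ k, Mlb ≤ augL A B f g α (x k) (y k) (p k) := by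
    intro k
    have h1 : Mf ≤ f (x k) := hMf _ (mem_closedBall_zero_iff.2 (hxR k))
    have h2 : Mg ≤ g (y k) := hMg _ (mem_closedBall_zero_iff.2 (hyR k))
    have h3 : ‖A (x k) - B (y k)‖ ≤ ‖A‖ * R + ‖B‖ * R := by
      calc ‖A (x k) - B (y k)‖ ≤ ‖A (x k)‖ + ‖B (y k)‖ := norm_sub_le _ _
        _ ≤ ‖A‖ * ‖x k‖ + ‖B‖ * ‖y k‖ := add_le_add (A.le_opNorm _) (B.le_opNorm _)
        _ ≤ ‖A‖ * R + ‖B‖ * R := add_le_add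
            (mul_le_mul_of_nonneg_left (hxR k) (norm_nonneg A))
            (mul_le_mul_of_nonneg_left (hyR k) (norm_nonneg B))
    have h4 : -(R * (‖A‖ * R + ‖B‖ * R)) ≤ ⟪p k, A (x k) - B (y k)⟫_ℝ := by
      have h5 := abs_real_inner_le_norm (p k) (A (x k) - B (y k))
      have h6 : ‖p k‖ * ‖A (x k) - B (y k)‖ ≤ R * (‖A‖ * R + ‖B‖ * R) :=
        mul_le_mul (hpR k) h3 (norm_nonneg _) hR0
      have h7 := neg_abs_le ⟪p k, A (x k) - B (y k)⟫_ℝ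
      linarith
    have h5 : 0 ≤ α/2 * ‖A (x k) - B (y k)‖^2 := by positivity
    simp only [augL, hMlb]
    linarith
  -- positivity of the descent coefficient
  have hαμ : (0:ℝ) < α * μ₀ := by positivity
  have hδ : 0 < μ₁/2 - 2*(ℓf+ℓφ)^2/(α*μ₀) - 2*ℓφ^2/(α*μ₀) := by
    have h1 : 4 * ((ℓf + ℓφ)^2 + ℓφ^2) < α * (μ₁ * μ₀) := by
      have := (div_lt_iff₀ (by positivity : (0:ℝ) < μ₁ * μ₀)).1 hαbig
      linarith
    have h2 : 2*(ℓf+ℓφ)^2/(α*μ₀) + 2*ℓφ^2/(α*μ₀) < μ₁/2 := by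
      rw [← add_div, div_lt_iff₀ hαμ]
      nlinarith
    linarith
  set δ : ℝ := μ₁/2 - 2*(ℓf+ℓφ)^2/(α*μ₀) - 2*ℓφ^2/(α*μ₀) with hδdef
  -- key Lyapunov inequality
  have hkey : ∀ k, (augL A B f g α (x (k+1+1)) (y (k+1+1)) (p (k+1+1))
        + (2*ℓφ^2/(α*μ₀)) * ‖x (k+1+1) - x (k+1)‖^2) + δ * ‖x (k+1+1) - x (k+1)‖^2
      ≤ augL A B f g α (x (k+1)) (y (k+1)) (p (k+1))
        + (2*ℓφ^2/(α*μ₀)) * ‖x (k+1) - x k‖^2 := by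
    intro k
    have hd := hdescent (k+1)
    have hpb := hPbound k
    have hq : (1/α) * ‖p (k+1+1) - p (k+1)‖^2
        ≤ (2*(ℓf+ℓφ)^2/(α*μ₀)) * ‖x (k+1+1) - x (k+1)‖^2
          + (2*ℓφ^2/(α*μ₀)) * ‖x (k+1) - x k‖^2 := by
      have e1 : (1/α) * ‖p (k+1+1) - p (k+1)‖^2
          = (1/(α*μ₀)) * (μ₀ * ‖p (k+1+1) - p (k+1)‖^2) := by
        field_simp
        try ring
      have e2 : (2*(ℓf+ℓφ)^2/(α*μ₀)) * ‖x (k+1+1) - x (k+1)‖^2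
            + (2*ℓφ^2/(α*μ₀)) * ‖x (k+1) - x k‖^2
          = (1/(α*μ₀)) * (2*(ℓf+ℓφ)^2 * ‖x (k+1+1) - x (k+1)‖^2
            + 2*ℓφ^2 * ‖x (k+1) - x k‖^2) := by
        field_simp
        try ring
      rw [e1, e2]
      exact mul_le_mul_of_nonneg_left hpb (by positivity)
    rw [hδdef]
    linarith
  -- telescoping
  have htel : ∀ N, (augL A B f g α (x (N+1)) (y (N+1)) (p (N+1))
        + (2*ℓφ^2/(α*μ₀)) * ‖x (N+1) - x N‖^2)
        + δ * (∑ j ∈ Finset.range N, ‖x (j+1+1) - x (j+1)‖^2)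
      ≤ augL A B f g α (x 1) (y 1) (p 1) + (2*ℓφ^2/(α*μ₀)) * ‖x 1 - x 0‖^2 := by
    intro N
    induction N with
    | zero => simp
    | succ N ih =>
      have hk := hkey N
      rw [Finset.sum_range_succ, mul_add]
      linarith
  have hsum1 : Summable (fun j => ‖x (j+1+1) - x (j+1)‖^2) := by
    apply summable_of_sum_range_le
      (c := (augL A B f g α (x 1) (y 1) (p 1) + (2*ℓφ^2/(α*μ₀)) * ‖x 1 - x 0‖^2 - Mlb)/δ)
    · intro j; positivity
    · intro N
      have h1 := htel N
      have h2 := hLB (N+1)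
      have h3 : 0 ≤ (2*ℓφ^2/(α*μ₀)) * ‖x (N+1) - x N‖^2 := by positivity
      rw [le_div_iff₀ hδ]
      linarith
  have hsa : Summable (fun j => ‖x (j+1) - x j‖^2) :=
    (summable_nat_add_iff 1).1 hsum1
  -- summability of dual increments
  have hsb1 : Summable (fun j => ‖p (j+1+1) - p (j+1)‖^2) := by
    apply Summable.of_nonneg_of_le (fun j => by positivity)
      (f := fun j => (2*(ℓf+ℓφ)^2/μ₀) * ‖x (j+1+1) - x (j+1)‖^2 + (2*ℓφ^2/μ₀) * ‖x (j+1) - x j‖^2)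
    · intro j
      have hpb := hPbound j
      have e1 : ‖p (j+1+1) - p (j+1)‖^2 = (1/μ₀) * (μ₀ * ‖p (j+1+1) - p (j+1)‖^2) := by
        field_simp
        try ring
      have e2 : (2*(ℓf+ℓφ)^2/μ₀) * ‖x (j+1+1) - x (j+1)‖^2 + (2*ℓφ^2/μ₀) * ‖x (j+1) - x j‖^2
          = (1/μ₀) * (2*(ℓf+ℓφ)^2 * ‖x (j+1+1) - x (j+1)‖^2 + 2*ℓφ^2 * ‖x (j+1) - x j‖^2) := by
        field_simp
        try ring
      rw [e1, e2]
      exact mul_le_mul_of_nonneg_left hpb (by positivity)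
    · exact (hsum1.mul_left _).add (hsa.mul_left _)
  have hsb : Summable (fun j => ‖p (j+1) - p j‖^2) :=
    (summable_nat_add_iff 1).1 hsb1
  -- summability of y increments
  obtain ⟨σ, hσ0, hσ⟩ := injective_lower_bound B hB
  have hBy : ∀ k, B (y (k+1)) = A (x (k+1)) - α⁻¹ • (p (k+1) - p k) := by
    intro k
    have h1 : p k + α • (A (x (k+1)) - B (y (k+1))) - p k = α • (A (x (k+1)) - B (y (k+1))) := by
      abel
    rw [hp k, h1, inv_smul_smul₀ (ne_of_gt hα)]
    abel
  have hsc1 : Summable (fun j => ‖y (j+1+1) - y (j+1)‖^2) := by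
    apply Summable.of_nonneg_of_le (fun j => by positivity)
      (f := fun j => (3/σ^2) * (‖A‖^2 * ‖x (j+1+1) - x (j+1)‖^2
        + (α⁻¹)^2 * ‖p (j+1+1) - p (j+1)‖^2 + (α⁻¹)^2 * ‖p (j+1) - p j‖^2))
    · intro j
      have h1 : σ * ‖y (j+1+1) - y (j+1)‖ ≤ ‖B (y (j+1+1)) - B (y (j+1))‖ := by
        rw [← map_sub]; exact hσ _
      have h2 : B (y (j+1+1)) - B (y (j+1))
          = A (x (j+1+1) - x (j+1)) - α⁻¹ • (p (j+1+1) - p (j+1)) + α⁻¹ • (p (j+1) - p j) := by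
        rw [hBy (j+1), hBy j, map_sub]
        module
      have h3 : ‖B (y (j+1+1)) - B (y (j+1))‖
          ≤ ‖A‖ * ‖x (j+1+1) - x (j+1)‖ + α⁻¹ * ‖p (j+1+1) - p (j+1)‖ + α⁻¹ * ‖p (j+1) - p j‖ := by
        rw [h2]
        have e1 := norm_add_le (A (x (j+1+1) - x (j+1)) - α⁻¹ • (p (j+1+1) - p (j+1)))
          (α⁻¹ • (p (j+1) - p j))
        have e2 := norm_sub_le (A (x (j+1+1) - x (j+1))) (α⁻¹ • (p (j+1+1) - p (j+1)))
        have e3 : ‖α⁻¹ • (p (j+1+1) - p (j+1))‖ = α⁻¹ * ‖p (j+1+1) - p (j+1)‖ := by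
          rw [norm_smul, Real.norm_eq_abs, abs_of_pos (inv_pos.2 hα)]
        have e4 : ‖α⁻¹ • (p (j+1) - p j)‖ = α⁻¹ * ‖p (j+1) - p j‖ := by
          rw [norm_smul, Real.norm_eq_abs, abs_of_pos (inv_pos.2 hα)]
        have e5 := A.le_opNorm (x (j+1+1) - x (j+1))
        rw [e4] at e1
        rw [e3] at e2
        linarith
      have h4 : (σ * ‖y (j+1+1) - y (j+1)‖)^2
          ≤ (‖A‖ * ‖x (j+1+1) - x (j+1)‖ + α⁻¹ * ‖p (j+1+1) - p (j+1)‖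
            + α⁻¹ * ‖p (j+1) - p j‖)^2 :=
        pow_le_pow_left₀ (by positivity) (h1.trans h3) 2
      have h5 : σ^2 * ‖y (j+1+1) - y (j+1)‖^2
          ≤ 3 * (‖A‖^2 * ‖x (j+1+1) - x (j+1)‖^2
            + (α⁻¹)^2 * ‖p (j+1+1) - p (j+1)‖^2 + (α⁻¹)^2 * ‖p (j+1) - p j‖^2) := by
        nlinarith [h4, sq_nonneg (‖A‖ * ‖x (j+1+1) - x (j+1)‖ - α⁻¹ * ‖p (j+1+1) - p (j+1)‖),
          sq_nonneg (‖A‖ * ‖x (j+1+1) - x (j+1)‖ - α⁻¹ * ‖p (j+1) - p j‖),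
          sq_nonneg (α⁻¹ * ‖p (j+1+1) - p (j+1)‖ - α⁻¹ * ‖p (j+1) - p j‖)]
      rw [div_mul_eq_mul_div, le_div_iff₀ (by positivity : (0:ℝ) < σ^2)]
      nlinarith [h5]
    · exact (((hsum1.mul_left _).add (hsb1.mul_left _)).add (hsb.mul_left _)).mul_left _
  have hscy : Summable (fun j => ‖y (j+1) - y j‖^2) :=
    (summable_nat_add_iff 1).1 hsc1
  -- conclusion
  have hmax : ∀ u v w : ℝ, 0 ≤ u → 0 ≤ v → 0 ≤ w →
      (max u (max v w))^2 ≤ u^2 + (v^2 + w^2) := by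
    intro u v w hu hv hw
    rcases le_total u (max v w) with h | h
    · rw [max_eq_right h]
      rcases le_total v w with h' | h'
      · rw [max_eq_right h']; nlinarith
      · rw [max_eq_left h']; nlinarith
    · rw [max_eq_left h]; nlinarith
  have hTle : ∀ k, ‖((x k, y k, p k) : EuclideanSpace ℝ (Fin n₁) ×
        EuclideanSpace ℝ (Fin n₂) × EuclideanSpace ℝ (Fin m))
        - (x (k + 1), y (k + 1), p (k + 1))‖ ^ 2
      ≤ ‖x (k+1) - x k‖^2 + (‖y (k+1) - y k‖^2 + ‖p (k+1) - p k‖^2) := by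
    intro k
    have hnorm : ‖((x k, y k, p k) : EuclideanSpace ℝ (Fin n₁) ×
          EuclideanSpace ℝ (Fin n₂) × EuclideanSpace ℝ (Fin m))
          - (x (k + 1), y (k + 1), p (k + 1))‖
        = max ‖x k - x (k+1)‖ (max ‖y k - y (k+1)‖ ‖p k - p (k+1)‖) := by
      rw [Prod.norm_def, Prod.norm_def]
      rfl
    rw [hnorm, norm_sub_rev (x k), norm_sub_rev (y k), norm_sub_rev (p k)]
    exact hmax _ _ _ (norm_nonneg _) (norm_nonneg _) (norm_nonneg _)
  have hsumT : Summable (fun k => ‖((x k, y k, p k) : EuclideanSpace ℝ (Fin n₁) ×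
      EuclideanSpace ℝ (Fin n₂) × EuclideanSpace ℝ (Fin m))
      - (x (k + 1), y (k + 1), p (k + 1))‖ ^ 2) :=
    Summable.of_nonneg_of_le (fun k => sq_nonneg _) hTle (hsa.add (hscy.add hsb))
  refine ⟨hsumT, ?_⟩
  have h0 := hsumT.tendsto_atTop_zero
  have hfn : (fun k => ‖((x k, y k, p k) : EuclideanSpace ℝ (Fin n₁) ×
        EuclideanSpace ℝ (Fin n₂) × EuclideanSpace ℝ (Fin m))
        - (x (k + 1), y (k + 1), p (k + 1))‖)
      = fun k => Real.sqrt (‖((x k, y k, p k) : EuclideanSpace ℝ (Fin n₁) ×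
        EuclideanSpace ℝ (Fin n₂) × EuclideanSpace ℝ (Fin m))
        - (x (k + 1), y (k + 1), p (k + 1))‖ ^ 2) := by
    funext k
    rw [Real.sqrt_sq (norm_nonneg _)]
  rw [hfn]
  have hcont : Filter.Tendsto Real.sqrt (nhds 0) (nhds 0) := by
    simpa using Real.continuous_sqrt.tendsto 0
  exact hcont.comp h0
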